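/- Each map W_{ij} : X → X, W_{ij}(x,y,z) = (u_i(x), v_j(y), F_{ij}(x,y,z)), is a contraction with respect to the metric d_δ, with contraction ratio at most c := max{ sup_{i,j}(δ_{ij} + δθ), sup_{i,j} α_{ij} } < 1 (indeed sup_{i,j}(δ_{ij} + δθ) ≤ 1/2). Consequently there exists a nonempty compact set A ⊆ X such that A = closure( ⋃_{i,j≥1} W_{ij}(A) ). -/

import Mathlib

open Set

lemma sqrt_tri_aux (a₁ a₂ b₁ b₂ c₁ c₂ : ℝ) :
    Real.sqrt ((a₁ - c₁)^2 + (a₂ - c₂)^2) ≤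
      Real.sqrt ((a₁ - b₁)^2 + (a₂ - b₂)^2) + Real.sqrt ((b₁ - c₁)^2 + (b₂ - c₂)^2) := by
  set x₁ := a₁ - b₁ with hx₁
  set x₂ := a₂ - b₂ with hx₂
  set y₁ := b₁ - c₁ with hy₁
  set y₂ := b₂ - c₂ with hy₂
  set sA := Real.sqrt (x₁^2 + x₂^2) with hsA
  set sB := Real.sqrt (y₁^2 + y₂^2) with hsB
  have hA : sA^2 = x₁^2 + x₂^2 := Real.sq_sqrt (by positivity)
  have hB : sB^2 = y₁^2 + y₂^2 := Real.sq_sqrt (by positivity)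
  have hA0 : 0 ≤ sA := Real.sqrt_nonneg _
  have hB0 : 0 ≤ sB := Real.sqrt_nonneg _
  have hCS : x₁*y₁ + x₂*y₂ ≤ sA * sB := by
    nlinarith [sq_nonneg (x₁*y₂ - x₂*y₁), mul_nonneg hA0 hB0,
      sq_nonneg (sA*sB - (x₁*y₁ + x₂*y₂)), sq_nonneg (sA*sB + (x₁*y₁ + x₂*y₂))]
  have hc1 : a₁ - c₁ = x₁ + y₁ := by rw [hx₁, hy₁]; ring
  have hc2 : a₂ - c₂ = x₂ + y₂ := by rw [hx₂, hy₂]; ring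
  rw [hc1, hc2]
  have h2 : (x₁ + y₁)^2 + (x₂ + y₂)^2 ≤ (sA + sB)^2 := by nlinarith
  calc Real.sqrt ((x₁ + y₁)^2 + (x₂ + y₂)^2) ≤ Real.sqrt ((sA + sB)^2) := Real.sqrt_le_sqrt h2
    _ = sA + sB := Real.sqrt_sq (by positivity)

lemma abs_sq_le_aux {x y cA : ℝ} (h : |x| ≤ cA * |y|) : x^2 ≤ cA^2 * y^2 := by
  have h2 := mul_self_le_mul_self (abs_nonneg x) h
  rw [abs_mul_abs_self] at h2
  nlinarith [abs_mul_abs_self y]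

lemma sum_sq_le_aux {x y dx dy cA cB m : ℝ} (h1 : x^2 ≤ cA^2 * dx^2) (h2 : y^2 ≤ cB^2 * dy^2)
    (hA : 0 ≤ cA) (hB : 0 ≤ cB) (hAm : cA ≤ m) (hBm : cB ≤ m) :
    x^2 + y^2 ≤ m^2 * (dx^2 + dy^2) := by
  nlinarith [mul_self_le_mul_self hA hAm, mul_self_le_mul_self hB hBm, sq_nonneg dx, sq_nonneg dy]

lemma two_sq_aux {x y D : ℝ} (h1 : |x| ≤ D) (h2 : |y| ≤ D) : x^2 + y^2 ≤ 2 * D^2 := by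
  nlinarith [abs_nonneg x, abs_nonneg y, abs_mul_abs_self x, abs_mul_abs_self y,
    mul_self_le_mul_self (abs_nonneg x) h1, mul_self_le_mul_self (abs_nonneg y) h2]

set_option maxHeartbeats 1000000 in
/-- Each map `W i j (x,y,z) = (uᵢ x, vⱼ y, Fᵢⱼ (x,y,z))` on
`X = I × J × K` is a contraction for the metric
`d_δ((x,y,z),(x',y',z')) = ‖(x,y)-(x',y')‖ + δ|z-z'|`, with contraction ratio at
most `c = max (⨆ (δᵢⱼ + δθ)) (⨆ αᵢⱼ) < 1` (indeed `⨆ (δᵢⱼ + δθ) ≤ 1/2`);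
consequently there is a nonempty compact `A ⊆ X` with
`A = closure (⋃ i j, W i j '' A)`. -/
theorem contraction_and_attractor_of_countable_bivariate_IFS
    (a b c d k₁ k₂ : ℝ) (hab : a < b) (hcd : c < d) (hk : k₁ < k₂)
    (X : Set (ℝ × ℝ × ℝ)) (hX : X = (Icc a b) ×ˢ ((Icc c d) ×ˢ (Icc k₁ k₂)))
    (u : ℕ → ℝ → ℝ) (v : ℕ → ℝ → ℝ)
    (A B : ℕ → ℝ) (hApos : ∀ i, 0 < A i) (hBpos : ∀ j, 0 < B j)
    (hu : ∀ i, MapsTo (u i) (Icc a b) (Icc a b))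
    (hv : ∀ j, MapsTo (v j) (Icc c d) (Icc c d))
    (huLip : ∀ i, ∀ x ∈ Icc a b, ∀ x' ∈ Icc a b, |u i x - u i x'| ≤ A i * |x - x'|)
    (hvLip : ∀ j, ∀ y ∈ Icc c d, ∀ y' ∈ Icc c d, |v j y - v j y'| ≤ B j * |y - y'|)
    (r : ℝ) (hr : r < 1/2) (hdeltab : ∀ i j, max (A i) (B j) ≤ r)
    (F : ℕ → ℕ → ℝ × ℝ × ℝ → ℝ)
    (hFcont : ∀ i j, ContinuousOn (F i j) X)
    (hFmaps : ∀ i j, ∀ p ∈ X, F i j p ∈ Icc k₁ k₂)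
    (θ : ℝ) (hθ : 0 < θ)
    (hFxy : ∀ i j, ∀ p ∈ X, ∀ q ∈ X, p.2.2 = q.2.2 →
      |F i j p - F i j q| ≤ θ * Real.sqrt ((p.1 - q.1) ^ 2 + (p.2.1 - q.2.1) ^ 2))
    (α : ℕ → ℕ → ℝ) (hαpos : ∀ i j, 0 < α i j)
    (sα : ℝ) (hsα : sα < 1) (hαb : ∀ i j, α i j ≤ sα)
    (hFz : ∀ i j, ∀ p ∈ X, ∀ q ∈ X, p.1 = q.1 → p.2.1 = q.2.1 →
      |F i j p - F i j q| ≤ α i j * |p.2.2 - q.2.2|)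
    (δ : ℝ) (hδ : δ = ⨅ p : ℕ × ℕ, (1 - 2 * max (A p.1) (B p.2)) / (2 * θ))
    (dδ : ℝ × ℝ × ℝ → ℝ × ℝ × ℝ → ℝ)
    (hd : ∀ p q, dδ p q =
      Real.sqrt ((p.1 - q.1) ^ 2 + (p.2.1 - q.2.1) ^ 2) + δ * |p.2.2 - q.2.2|)
    (W : ℕ → ℕ → ℝ × ℝ × ℝ → ℝ × ℝ × ℝ)
    (hW : ∀ i j p, W i j p = (u i p.1, v j p.2.1, F i j p))
    (cc : ℝ)
    (hcc : cc = max (⨆ p : ℕ × ℕ, (max (A p.1) (B p.2) + δ * θ))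
                    (⨆ p : ℕ × ℕ, α p.1 p.2)) :
    (⨆ p : ℕ × ℕ, (max (A p.1) (B p.2) + δ * θ)) ≤ 1 / 2 ∧
    cc < 1 ∧
    (∀ i j, ∀ p ∈ X, ∀ q ∈ X, dδ (W i j p) (W i j q) ≤ cc * dδ p q) ∧
    ∃ A₀ : Set (ℝ × ℝ × ℝ), A₀ ⊆ X ∧ A₀.Nonempty ∧ IsCompact A₀ ∧
      A₀ = closure (⋃ i, ⋃ j, W i j '' A₀) := by
  -- numeric preliminaries
  have h2θ : (0:ℝ) < 2 * θ := by linarith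
  have hlb : ∀ p : ℕ × ℕ, (1 - 2*r) / (2*θ) ≤ (1 - 2 * max (A p.1) (B p.2)) / (2*θ) := by
    intro p
    have := hdeltab p.1 p.2
    gcongr
  have hδlbpos : (0:ℝ) < (1 - 2*r) / (2*θ) := by
    apply div_pos (by linarith) h2θ
  have hδpos : 0 < δ := by
    rw [hδ]
    exact lt_of_lt_of_le hδlbpos (le_ciInf hlb)
  have hbdd : BddBelow (Set.range fun p : ℕ × ℕ => (1 - 2 * max (A p.1) (B p.2)) / (2*θ)) :=
    ⟨(1 - 2*r) / (2*θ), by rintro _ ⟨p, rfl⟩; exact hlb p⟩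
  have hδle : ∀ i j, δ ≤ (1 - 2 * max (A i) (B j)) / (2*θ) := by
    intro i j
    rw [hδ]
    exact ciInf_le hbdd (i, j)
  have hterm : ∀ p : ℕ × ℕ, max (A p.1) (B p.2) + δ * θ ≤ 1/2 := by
    intro p
    have h1 := hδle p.1 p.2
    have h2 : δ * (2*θ) ≤ 1 - 2 * max (A p.1) (B p.2) := by
      rw [← le_div_iff₀ h2θ]; exact h1
    nlinarith
  have part1 : (⨆ p : ℕ × ℕ, (max (A p.1) (B p.2) + δ * θ)) ≤ 1 / 2 := ciSup_le hterm
  have hsupα : (⨆ p : ℕ × ℕ, α p.1 p.2) ≤ sα := ciSup_le fun p => hαb p.1 p.2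
  have part2 : cc < 1 := by
    rw [hcc]
    exact max_lt (lt_of_le_of_lt part1 (by norm_num)) (lt_of_le_of_lt hsupα hsα)
  have hcc1 : ∀ i j, max (A i) (B j) + δ * θ ≤ cc := by
    intro i j
    rw [hcc]
    exact le_trans (le_ciSup (f := fun p : ℕ × ℕ => max (A p.1) (B p.2) + δ * θ)
      ⟨1/2, by rintro _ ⟨p, rfl⟩; exact hterm p⟩ (i, j)) (le_max_left _ _)
  have hcc2 : ∀ i j, α i j ≤ cc := by
    intro i j
    rw [hcc]
    exact le_trans (le_ciSup (f := fun p : ℕ × ℕ => α p.1 p.2)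
      ⟨sα, by rintro _ ⟨p, rfl⟩; exact hαb p.1 p.2⟩ (i, j)) (le_max_right _ _)
  have ccpos : 0 < cc := lt_of_lt_of_le (hαpos 0 0) (hcc2 0 0)
  have hcontr : ∀ i j, ∀ p ∈ X, ∀ q ∈ X, dδ (W i j p) (W i j q) ≤ cc * dδ p q := by
    intro i j p hp q hq
    have hpX := hp
    have hqX := hq
    rw [hX] at hp hq
    obtain ⟨hp1, hp2, hp3⟩ := hp
    obtain ⟨hq1, hq2, hq3⟩ := hq
    set s := Real.sqrt ((p.1 - q.1)^2 + (p.2.1 - q.2.1)^2) with hs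
    have hs0 : 0 ≤ s := Real.sqrt_nonneg _
    set m := max (A i) (B j) with hm
    have hmpos : 0 < m := lt_of_lt_of_le (hApos i) (le_max_left _ _)
    have hu' : |u i p.1 - u i q.1| ≤ A i * |p.1 - q.1| := huLip i _ hp1 _ hq1
    have hv' : |v j p.2.1 - v j q.2.1| ≤ B j * |p.2.1 - q.2.1| := hvLip j _ hp2 _ hq2
    have hsqrt : Real.sqrt ((u i p.1 - u i q.1)^2 + (v j p.2.1 - v j q.2.1)^2) ≤ m * s := by
      have hin : (u i p.1 - u i q.1)^2 + (v j p.2.1 - v j q.2.1)^2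
          ≤ m^2 * ((p.1 - q.1)^2 + (p.2.1 - q.2.1)^2) := by
        exact sum_sq_le_aux (abs_sq_le_aux hu') (abs_sq_le_aux hv')
          (hApos i).le (hBpos j).le (le_max_left _ _) (le_max_right _ _)
      calc Real.sqrt ((u i p.1 - u i q.1)^2 + (v j p.2.1 - v j q.2.1)^2)
          ≤ Real.sqrt (m^2 * ((p.1 - q.1)^2 + (p.2.1 - q.2.1)^2)) := Real.sqrt_le_sqrt hin
        _ = m * s := by
            rw [Real.sqrt_mul (sq_nonneg m), Real.sqrt_sq hmpos.le]
    have hF : |F i j p - F i j q| ≤ θ * s + α i j * |p.2.2 - q.2.2| := by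
      set q' : ℝ × ℝ × ℝ := (q.1, q.2.1, p.2.2) with hq'
      have hq'X : q' ∈ X := by
        rw [hX]
        exact ⟨hq1, hq2, hp3⟩
      have h1 : |F i j p - F i j q'| ≤ θ * s := by
        have := hFxy i j p hpX q' hq'X rfl
        simpa [hq'] using this
      have h2 : |F i j q' - F i j q| ≤ α i j * |p.2.2 - q.2.2| := by
        have := hFz i j q' hq'X q hqX rfl rfl
        simpa [hq'] using this
      calc |F i j p - F i j q| ≤ |F i j p - F i j q'| + |F i j q' - F i j q| := abs_sub_le _ _ _
        _ ≤ θ * s + α i j * |p.2.2 - q.2.2| := add_le_add h1 h2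
    rw [hd (W i j p) (W i j q), hd p q, hW i j p, hW i j q]
    dsimp only
    have key1 : (m + δ * θ) * s ≤ cc * s := mul_le_mul_of_nonneg_right (hcc1 i j) hs0
    have key2 : α i j * (δ * |p.2.2 - q.2.2|) ≤ cc * (δ * |p.2.2 - q.2.2|) :=
      mul_le_mul_of_nonneg_right (hcc2 i j) (mul_nonneg hδpos.le (abs_nonneg _))
    have key3 : δ * |F i j p - F i j q| ≤ δ * (θ * s + α i j * |p.2.2 - q.2.2|) :=
      mul_le_mul_of_nonneg_left hF hδpos.le
    linarith [hsqrt, key1, key2, key3]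
  refine ⟨part1, part2, hcontr, ?_⟩
  -- metric comparison facts
  have hdnn : ∀ p q : ℝ × ℝ × ℝ, 0 ≤ dδ p q := by
    intro p q; rw [hd]; positivity
  have hdist3 : ∀ p q : ℝ × ℝ × ℝ, |p.1 - q.1| ≤ dist p q ∧ |p.2.1 - q.2.1| ≤ dist p q ∧
      |p.2.2 - q.2.2| ≤ dist p q := by
    intro p q
    rw [Prod.dist_eq, Prod.dist_eq, Real.dist_eq, Real.dist_eq, Real.dist_eq]
    exact ⟨le_max_left _ _, le_trans (le_max_left _ _) (le_max_right _ _),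
      le_trans (le_max_right _ _) (le_max_right _ _)⟩
  set Cd := Real.sqrt 2 + δ with hCddef
  set M := max 1 (1/δ) with hMdef
  have hCd0 : 0 < Cd := lt_of_lt_of_le hδpos (le_add_of_nonneg_left (Real.sqrt_nonneg 2))
  have hM0 : (0:ℝ) < M := lt_of_lt_of_le one_pos (le_max_left _ _)
  have hCd : ∀ p q : ℝ × ℝ × ℝ, dδ p q ≤ Cd * dist p q := by
    intro p q
    obtain ⟨h1, h2, h3⟩ := hdist3 p q
    rw [hd, hCddef]
    have hD : 0 ≤ dist p q := dist_nonneg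
    have hsq : Real.sqrt ((p.1 - q.1)^2 + (p.2.1 - q.2.1)^2) ≤ Real.sqrt 2 * dist p q := by
      have hin : (p.1 - q.1)^2 + (p.2.1 - q.2.1)^2 ≤ 2 * dist p q ^ 2 := two_sq_aux h1 h2
      calc Real.sqrt ((p.1 - q.1)^2 + (p.2.1 - q.2.1)^2)
          ≤ Real.sqrt (2 * dist p q ^ 2) := Real.sqrt_le_sqrt hin
        _ = Real.sqrt 2 * dist p q := by
            rw [Real.sqrt_mul (by norm_num : (0:ℝ) ≤ 2), Real.sqrt_sq hD]
    linarith [hsq, mul_le_mul_of_nonneg_left h3 hδpos.le]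
  have hMd : ∀ p q : ℝ × ℝ × ℝ, dist p q ≤ M * dδ p q := by
    intro p q
    rw [hd, hMdef, Prod.dist_eq, Prod.dist_eq, Real.dist_eq, Real.dist_eq, Real.dist_eq]
    set s := Real.sqrt ((p.1 - q.1)^2 + (p.2.1 - q.2.1)^2) with hsdef
    have hs0 : 0 ≤ s := Real.sqrt_nonneg _
    have habs : 0 ≤ δ * |p.2.2 - q.2.2| := mul_nonneg hδpos.le (abs_nonneg _)
    have hs1 : |p.1 - q.1| ≤ s := by
      rw [hsdef, ← Real.sqrt_sq_eq_abs]
      exact Real.sqrt_le_sqrt (by nlinarith [sq_nonneg (p.2.1 - q.2.1)])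
    have hs2 : |p.2.1 - q.2.1| ≤ s := by
      rw [hsdef, ← Real.sqrt_sq_eq_abs]
      exact Real.sqrt_le_sqrt (by nlinarith [sq_nonneg (p.1 - q.1)])
    have htot : 0 ≤ s + δ * |p.2.2 - q.2.2| := add_nonneg hs0 habs
    refine max_le ?_ (max_le ?_ ?_)
    · calc |p.1 - q.1| ≤ s + δ * |p.2.2 - q.2.2| := by linarith
        _ ≤ max 1 (1/δ) * (s + δ * |p.2.2 - q.2.2|) :=
            le_mul_of_one_le_left htot (le_max_left _ _)
    · calc |p.2.1 - q.2.1| ≤ s + δ * |p.2.2 - q.2.2| := by linarith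
        _ ≤ max 1 (1/δ) * (s + δ * |p.2.2 - q.2.2|) :=
            le_mul_of_one_le_left htot (le_max_left _ _)
    · have hz : |p.2.2 - q.2.2| = (1/δ) * (δ * |p.2.2 - q.2.2|) := by
        field_simp
      calc |p.2.2 - q.2.2| = (1/δ) * (δ * |p.2.2 - q.2.2|) := hz
        _ ≤ (1/δ) * (s + δ * |p.2.2 - q.2.2|) :=
            mul_le_mul_of_nonneg_left (le_add_of_nonneg_left hs0) (by positivity)
        _ ≤ max 1 (1/δ) * (s + δ * |p.2.2 - q.2.2|) :=
            mul_le_mul_of_nonneg_right (le_max_right _ _) htot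
  have htri : ∀ p q r' : ℝ × ℝ × ℝ, dδ p r' ≤ dδ p q + dδ q r' := by
    intro p q r'
    rw [hd, hd, hd]
    have h1 := sqrt_tri_aux p.1 p.2.1 q.1 q.2.1 r'.1 r'.2.1
    have h2 : |p.2.2 - r'.2.2| ≤ |p.2.2 - q.2.2| + |q.2.2 - r'.2.2| := abs_sub_le _ _ _
    linarith [mul_le_mul_of_nonneg_left h2 hδpos.le]
  -- topological preliminaries
  have hXcl : IsClosed X := by
    rw [hX]; exact isClosed_Icc.prod (isClosed_Icc.prod isClosed_Icc)
  have hXc : IsCompact X := by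
    rw [hX]; exact isCompact_Icc.prod (isCompact_Icc.prod isCompact_Icc)
  have hXne : X.Nonempty := by
    rw [hX]
    exact (nonempty_Icc.2 hab.le).prod ((nonempty_Icc.2 hcd.le).prod (nonempty_Icc.2 hk.le))
  have hWmaps : ∀ i j, MapsTo (W i j) X X := by
    intro i j p hp
    have hp' := hp
    rw [hX] at hp'
    obtain ⟨h1, h2, h3⟩ := hp'
    rw [hX, hW]
    exact ⟨hu i h1, hv j h2, hFmaps i j p hp⟩
  obtain ⟨T, hT⟩ : ∃ T : Set (ℝ × ℝ × ℝ) → Set (ℝ × ℝ × ℝ),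
      ∀ S, T S = closure (⋃ i, ⋃ j, W i j '' S) := ⟨_, fun _ => rfl⟩
  have hTsub : ∀ S, S ⊆ X → T S ⊆ X := by
    intro S hS
    rw [hT]
    refine closure_minimal (iUnion_subset fun i => iUnion_subset fun j => ?_) hXcl
    exact image_subset_iff.2 fun p hp => hWmaps i j (hS hp)
  have hTmono : ∀ S₁ S₂ : Set (ℝ × ℝ × ℝ), S₁ ⊆ S₂ → T S₁ ⊆ T S₂ := by
    intro S₁ S₂ h
    rw [hT, hT]
    exact closure_mono (iUnion_mono fun i => iUnion_mono fun j => image_mono h)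
  have hTne : ∀ S : Set (ℝ × ℝ × ℝ), S.Nonempty → (T S).Nonempty := by
    rintro S ⟨p, hp⟩
    rw [hT]
    exact ⟨W 0 0 p, subset_closure (mem_iUnion.2 ⟨0, mem_iUnion.2 ⟨0, mem_image_of_mem _ hp⟩⟩)⟩
  have hTcl : ∀ S, IsClosed (T S) := fun S => by rw [hT]; exact isClosed_closure
  obtain ⟨K, hK0, hKs⟩ : ∃ K : ℕ → Set (ℝ × ℝ × ℝ), K 0 = X ∧ ∀ n, K (n+1) = T (K n) :=
    ⟨fun n => T^[n] X, rfl, fun n => Function.iterate_succ_apply' T n X⟩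
  have hKsub : ∀ n, K n ⊆ X := by
    intro n
    induction n with
    | zero => rw [hK0]
    | succ n ih => rw [hKs]; exact hTsub _ ih
  have hKstep : ∀ n, K (n+1) ⊆ K n := by
    intro n
    induction n with
    | zero =>
        rw [hKs, hK0]
        exact hTsub X (subset_refl X)
    | succ n ih =>
        calc K (n+1+1) = T (K (n+1)) := hKs (n+1)
          _ ⊆ T (K n) := hTmono _ _ ih
          _ = K (n+1) := (hKs n).symm
  have hKcl : ∀ n, IsClosed (K n) := by
    intro n
    cases n with
    | zero => rw [hK0]; exact hXcl
    | succ n => rw [hKs]; exact hTcl _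
  have hKc : ∀ n, IsCompact (K n) := fun n => hXc.of_isClosed_subset (hKcl n) (hKsub n)
  have hKne : ∀ n, (K n).Nonempty := by
    intro n
    induction n with
    | zero => rw [hK0]; exact hXne
    | succ n ih => rw [hKs]; exact hTne _ ih
  have hA₀sub : (⋂ n, K n) ⊆ X := (iInter_subset K 0).trans (by rw [hK0])
  refine ⟨⋂ n, K n, hA₀sub, ?_, ?_, ?_⟩
  · exact IsCompact.nonempty_iInter_of_sequence_nonempty_isCompact_isClosed K hKstep hKne
      (hKc 0) hKcl
  · exact hXc.of_isClosed_subset (isClosed_iInter hKcl) hA₀sub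
  · rw [← hT]
    refine subset_antisymm ?_ ?_
    · -- A₀ ⊆ T A₀ : the ε-argument
      intro x hx
      rw [hT, Metric.mem_closure_iff]
      intro ε hε
      set ε₁ := ε / (2 * M * Cd + 1) with hε₁def
      have hden : (0:ℝ) < 2 * M * Cd + 1 := by positivity
      have hε₁ : 0 < ε₁ := div_pos hε hden
      set U := ⋃ a' ∈ (⋂ n, K n), Metric.ball a' ε₁ with hUdef
      have hUopen : IsOpen U := isOpen_biUnion fun _ _ => Metric.isOpen_ball
      have hA₀U : (⋂ n, K n) ⊆ U := fun a' ha' => mem_biUnion ha' (Metric.mem_ball_self hε₁)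
      obtain ⟨n, hnU⟩ : ∃ n, K n ⊆ U := by
        by_contra hcon
        push_neg at hcon
        have hne' : ∀ n, (K n \ U).Nonempty := by
          intro n
          obtain ⟨z, hz1, hz2⟩ := Set.not_subset.1 (hcon n)
          exact ⟨z, hz1, hz2⟩
        have hstep' : ∀ n, (K (n+1) \ U) ⊆ (K n \ U) :=
          fun n => diff_subset_diff_left (hKstep n)
        have hcl' : ∀ n, IsClosed (K n \ U) := fun n => (hKcl n).sdiff hUopen
        obtain ⟨z, hz⟩ := IsCompact.nonempty_iInter_of_sequence_nonempty_isCompact_isClosed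
          _ hstep' hne' ((hKc 0).of_isClosed_subset (hcl' 0) diff_subset) hcl'
        have hz1 : z ∈ ⋂ n, K n := mem_iInter.2 fun n => (mem_iInter.1 hz n).1
        exact (mem_iInter.1 hz 0).2 (hA₀U hz1)
      have hx1 : x ∈ T (K n) := by
        have := mem_iInter.1 hx (n+1)
        rwa [hKs] at this
      rw [hT, Metric.mem_closure_iff] at hx1
      obtain ⟨y, hy, hxy⟩ := hx1 ε₁ hε₁
      simp only [mem_iUnion, mem_image] at hy
      obtain ⟨i, j, p, hpK, rfl⟩ := hy
      obtain ⟨a', ha', hpa'⟩ := mem_iUnion₂.1 (hnU hpK)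
      refine ⟨W i j a', mem_iUnion.2 ⟨i, mem_iUnion.2 ⟨j, mem_image_of_mem _ ha'⟩⟩, ?_⟩
      have hpX : p ∈ X := hKsub n hpK
      have ha'X : a' ∈ X := hA₀sub ha'
      have e1 : dδ x (W i j p) ≤ Cd * dist x (W i j p) := hCd _ _
      have e2 : dδ (W i j p) (W i j a') ≤ cc * dδ p a' := hcontr i j p hpX a' ha'X
      have e3 : dδ p a' ≤ Cd * dist p a' := hCd _ _
      have e4 : dist p a' < ε₁ := Metric.mem_ball.1 hpa'
      have e5 : dδ x (W i j a') ≤ dδ x (W i j p) + dδ (W i j p) (W i j a') := htri _ _ _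
      have e6 : dist x (W i j a') ≤ M * dδ x (W i j a') := hMd _ _
      have e7 : cc * dδ p a' ≤ dδ p a' := by nlinarith [hdnn p a', part2.le]
      have e8 : dδ x (W i j a') < Cd * ε₁ + Cd * ε₁ := by
        have m1 : Cd * dist x (W i j p) < Cd * ε₁ := mul_lt_mul_of_pos_left hxy hCd0
        have m2 : Cd * dist p a' < Cd * ε₁ := mul_lt_mul_of_pos_left e4 hCd0
        linarith
      have key : 2 * M * Cd * ε₁ < ε := by
        rw [hε₁def, ← mul_div_assoc, div_lt_iff₀ hden]
        nlinarith [hε, mul_pos (mul_pos two_pos hM0) hCd0]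
      calc dist x (W i j a') ≤ M * dδ x (W i j a') := e6
        _ < M * (Cd * ε₁ + Cd * ε₁) := by exact mul_lt_mul_of_pos_left e8 hM0
        _ ≤ ε := by nlinarith
    · -- T A₀ ⊆ A₀
      refine subset_iInter fun n => ?_
      cases n with
      | zero => rw [hK0]; exact hTsub _ hA₀sub
      | succ n => rw [hKs]; exact hTmono _ _ (iInter_subset K n)
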